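/- Let $X$ be a real Banach space, $x_0, f_0, \delta$ as above with $|||\cdot|||_{(x_0,f_0),\delta}$ the associated norm. Let $\eta > 0$ and let $|||\cdot|||_\eta$ be a norm on $X$ with $|||\cdot|||_\eta \leq |||\cdot|||_{(x_0,f_0),\delta} \leq (1+\eta)|||\cdot|||_\eta$. Then for all $h$ with $\|h\| = 1$ and all $t$ with $0 < |t| < \frac{\delta(1-\delta/2)}{(1-\delta)+|\langle f_0,h\rangle|}$: $$\frac{|||(1-\delta/2)x_0+th|||_\eta + |||(1-\delta/2)x_0-th|||_\eta - 2|||(1-\delta/2)x_0|||_\eta}{|t|} \geq \frac{2}{1+\eta}\left(\frac{\delta-(4-\delta)|\langle f_0,h\rangle|}{2(1-\delta/2)(2-\delta)} - \frac{\eta}{|t|}\right).$$ -/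

import Mathlib

set_option maxHeartbeats 800000 in
theorem stmt_14 (X : Type*) [NormedAddCommGroup X] [NormedSpace ℝ X] [CompleteSpace X]
    (x0 : X) (f0 : X →L[ℝ] ℝ) (hx0 : ‖x0‖ = 1) (hf0 : ‖f0‖ = 1) (hfx : f0 x0 = 1)
    (δ : ℝ) (hδ0 : 0 < δ) (hδ1 : δ < 1/2)
    (ψ : X → ℝ) (hψ0 : ∀ y, 0 ≤ ψ y)
    (hψeq : ∀ y, ψ y = (1 - δ) * ‖y + (ψ y - f0 y) • x0‖)
    (hψuniq : ∀ y t, 0 ≤ t → t = (1 - δ) * ‖y + (t - f0 y) • x0‖ → t = ψ y)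
    (N : X → ℝ)
    (hN1 : ∀ y, |f0 y| < (1 - δ) * ‖y‖ → N y = ‖y‖)
    (hN2 : ∀ y, (1 - δ) * ‖y‖ ≤ f0 y → N y = ψ y / (1 - δ) + (f0 y - ψ y) / (1 - δ/2))
    (hN3 : ∀ y, f0 y ≤ -((1 - δ) * ‖y‖) → N y = N (-y))
    (η : ℝ) (hη : 0 < η) (Nη : X → ℝ)
    (hNηnorm : (∀ (a : ℝ) (y : X), Nη (a • y) = |a| * Nη y) ∧
      (∀ y z : X, Nη (y + z) ≤ Nη y + Nη z) ∧ (∀ y : X, Nη y = 0 → y = 0))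
    (hle1 : ∀ y : X, Nη y ≤ N y) (hle2 : ∀ y : X, N y ≤ (1 + η) * Nη y) :
    ∀ h : X, ‖h‖ = 1 → ∀ t : ℝ, 0 < |t| → |t| < δ * (1 - δ/2) / ((1 - δ) + |f0 h|) →
      2 / (1 + η) * ((δ - (4 - δ) * |f0 h|) / (2 * (1 - δ/2) * (2 - δ)) - η / |t|) ≤
        (Nη ((1 - δ/2) • x0 + t • h) + Nη ((1 - δ/2) • x0 - t • h)
          - 2 * Nη ((1 - δ/2) • x0)) / |t| := by
  intro h hh t ht0 ht2
  have hδ2 : (0:ℝ) < 1 - δ/2 := by linarith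
  have hδm : (0:ℝ) < 1 - δ := by linarith
  have h2δ : (0:ℝ) < 2 - δ := by linarith
  have h1η : (0:ℝ) < 1 + η := by linarith
  set a := f0 h with ha
  have ha0 : 0 ≤ |a| := abs_nonneg a
  have ha1 : |a| ≤ 1 := by
    have h1 := f0.le_opNorm h
    rw [hf0, hh] at h1
    simpa [Real.norm_eq_abs] using h1
  set u := (1 - δ/2) • x0 with hu
  have hfu : f0 u = 1 - δ/2 := by
    rw [hu, map_smul, hfx]; simp
  have hnu : ‖u‖ = 1 - δ/2 := by
    rw [hu, norm_smul, hx0, Real.norm_eq_abs, abs_of_pos hδ2, mul_one]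
  -- ψ u = 0 and N u = 1
  have hψu : ψ u = 0 := by
    have hz : u + ((0:ℝ) - f0 u) • x0 = 0 := by
      rw [hfu, hu]; module
    exact (hψuniq u 0 le_rfl (by rw [hz]; simp)).symm
  have hNu : N u = 1 := by
    have hcone : (1 - δ) * ‖u‖ ≤ f0 u := by
      rw [hnu, hfu]; nlinarith
    rw [hN2 u hcone, hψu, hfu]
    field_simp
    ring
  set w := h - a • x0 with hw
  have hnw : 1 - |a| ≤ ‖w‖ := by
    have h1 : ‖h‖ ≤ ‖w‖ + ‖a • x0‖ := by
      have : h = w + a • x0 := by rw [hw]; module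
      rw [this]; exact norm_add_le _ _
    rw [hh, norm_smul, hx0, Real.norm_eq_abs, mul_one] at h1
    linarith
  -- bound |t| * ((1-δ) + |a|) < δ(1-δ/2)
  have htb : |t| * ((1 - δ) + |a|) < δ * (1 - δ/2) := by
    have hd : (0:ℝ) < (1 - δ) + |a| := by linarith
    exact (lt_div_iff₀ hd).mp ht2
  -- key facts for both perturbations
  have key : ∀ r : ℝ, |r| = |t| →
      f0 (u + r • h) = (1 - δ/2) + r * a ∧
      (1 - δ) * ‖u + r • h‖ ≤ f0 (u + r • h) ∧
      (1 - δ) * |t| * ‖w‖ ≤ (2 - δ) * ψ (u + r • h) := by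
    intro r hr
    have hfy : f0 (u + r • h) = (1 - δ/2) + r * a := by
      rw [map_add, map_smul, map_smul, hfx, smul_eq_mul, smul_eq_mul, mul_one, ← ha]
    have hra : - (r * a) ≤ |t| * |a| := by
      have := neg_abs_le (r * a)
      rw [abs_mul, hr] at this
      linarith
    refine ⟨hfy, ?_, ?_⟩
    · have hny : ‖u + r • h‖ ≤ (1 - δ/2) + |t| := by
        calc ‖u + r • h‖ ≤ ‖u‖ + ‖r • h‖ := norm_add_le _ _
          _ = (1 - δ/2) + |t| := by
              rw [hnu, norm_smul, hh, Real.norm_eq_abs, hr, mul_one]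
      rw [hfy]
      nlinarith [mul_le_mul_of_nonneg_left hny hδm.le]
    · set s := ψ (u + r • h) with hs
      have hs0 : 0 ≤ s := hψ0 _
      have hseq := hψeq (u + r • h)
      rw [← hs, hfy] at hseq
      have hrw : (u + r • h) + (s - ((1 - δ/2) + r * a)) • x0 = r • w + s • x0 := by
        rw [hu, hw]; module
      rw [hrw] at hseq
      have h5 : ‖r • w‖ - ‖s • x0‖ ≤ ‖r • w + s • x0‖ := by
        have h6 := norm_add_le (r • w + s • x0) (-(s • x0))
        simp only [add_neg_cancel_right, norm_neg] at h6
        linarith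
      rw [norm_smul, norm_smul, hx0, Real.norm_eq_abs, Real.norm_eq_abs, hr,
        abs_of_nonneg hs0, mul_one] at h5
      nlinarith [mul_le_mul_of_nonneg_left h5 hδm.le]
  obtain ⟨hfP, hcP, hbP⟩ := key t rfl
  obtain ⟨hfQ, hcQ, hbQ⟩ := key (-t) (abs_neg t)
  have hsub : u + (-t) • h = u - t • h := by module
  rw [hsub] at hfQ hcQ hbQ
  -- values of N
  have hNP : N (u + t • h) = ψ (u + t • h) / (1 - δ) +
      ((1 - δ/2) + t * a - ψ (u + t • h)) / (1 - δ/2) := by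
    rw [hN2 _ hcP, hfP]
  have hNQ : N (u - t • h) = ψ (u - t • h) / (1 - δ) +
      ((1 - δ/2) + (-t) * a - ψ (u - t • h)) / (1 - δ/2) := by
    rw [hN2 _ hcQ, hfQ]
  set sP := ψ (u + t • h) with hsP
  set sQ := ψ (u - t • h) with hsQ
  have hsP0 : 0 ≤ sP := hψ0 _
  have hsQ0 : 0 ≤ sQ := hψ0 _
  -- polynomial estimate
  have hpoly : 2 * (1 - δ) * |t| * (δ - (4 - δ) * |a|) ≤ δ * (2 - δ) * (sP + sQ) := by
    have h7 : 2 * (1 - δ) * |t| * ‖w‖ ≤ (2 - δ) * (sP + sQ) := by linarith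
    have h8 := mul_le_mul_of_nonneg_left h7 hδ0.le
    have h9 : (1 - |a|) * (2 * (1 - δ) * |t|) ≤ ‖w‖ * (2 * (1 - δ) * |t|) :=
      mul_le_mul_of_nonneg_right hnw (by positivity)
    have h10 : δ - (4 - δ) * |a| ≤ δ * (1 - |a|) := by nlinarith
    have h11 := mul_le_mul_of_nonneg_right h10
      (show (0:ℝ) ≤ 2 * (1 - δ) * |t| by positivity)
    nlinarith [mul_le_mul_of_nonneg_left h9 hδ0.le]
  -- second difference of N
  have hkey : 2 * ((δ - (4 - δ) * |a|) / (2 * (1 - δ/2) * (2 - δ))) * |t| ≤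
      N (u + t • h) + N (u - t • h) - 2 := by
    rw [hNP, hNQ]
    have hRHS : sP / (1 - δ) + ((1 - δ/2) + t * a - sP) / (1 - δ/2) +
        (sQ / (1 - δ) + ((1 - δ/2) + (-t) * a - sQ) / (1 - δ/2)) - 2 =
        (sP + sQ) * (δ/2) / ((1 - δ) * (1 - δ/2)) := by
      field_simp
      ring
    have hLHS : 2 * ((δ - (4 - δ) * |a|) / (2 * (1 - δ/2) * (2 - δ))) * |t| =
        (δ - (4 - δ) * |a|) * |t| / ((1 - δ/2) * (2 - δ)) := by
      field_simp
    have hdiv : (δ - (4 - δ) * |a|) * |t| / ((1 - δ/2) * (2 - δ)) ≤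
        (sP + sQ) * (δ/2) / ((1 - δ) * (1 - δ/2)) := by
      rw [div_le_div_iff₀ (by positivity) (by positivity)]
      nlinarith [mul_le_mul_of_nonneg_left hpoly hδ2.le]
    linarith [hRHS, hLHS, hdiv]
  -- transfer to Nη
  have hP := hle2 (u + t • h)
  have hQ := hle2 (u - t • h)
  have hR : Nη u ≤ 1 := hNu ▸ hle1 u
  have hfinkey : 2 * ((δ - (4 - δ) * |a|) / (2 * (1 - δ/2) * (2 - δ)) * |t| - η) ≤
      (1 + η) * (Nη (u + t • h) + Nη (u - t • h) - 2 * Nη u) := by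
    have h12 := mul_le_mul_of_nonneg_left hR h1η.le
    linarith
  have e1 : 2 / (1 + η) * ((δ - (4 - δ) * |a|) / (2 * (1 - δ/2) * (2 - δ)) - η / |t|) =
      (2 * ((δ - (4 - δ) * |a|) / (2 * (1 - δ/2) * (2 - δ)) * |t| - η)) / ((1 + η) * |t|) := by
    field_simp [ht0.ne', h1η.ne', hδ2.ne', h2δ.ne']
  have e2 : (Nη (u + t • h) + Nη (u - t • h) - 2 * Nη u) / |t| =
      ((1 + η) * (Nη (u + t • h) + Nη (u - t • h) - 2 * Nη u)) / ((1 + η) * |t|) := by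
    rw [mul_div_mul_left _ _ (ne_of_gt h1η)]
  rw [e1, e2]
  exact (div_le_div_iff_of_pos_right (by positivity)).mpr hfinkey
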